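/- The Knaster–Kuratowski fan X is not locally connected. -/

import Mathlib

open Set

/-- The apex of the Knaster–Kuratowski fan. -/
noncomputable def kkApex : ℝ × ℝ := (1/2, 1/2)

/-- The Cantor set, viewed inside `[0,1] × {0} ⊆ ℝ²` via first coordinates. -/
noncomputable def kkCantor : Set ℝ := cantorSet

/-- `C₁`: the endpoints of the open intervals removed in the construction of the
Cantor set, i.e. points `x` of the Cantor set which are an endpoint of a maximal
open interval disjoint from the Cantor set with both endpoints in the Cantor set. -/
def kkEndpoints : Set ℝ :=
  {x | x ∈ cantorSet ∧ ∃ a ∈ cantorSet, ∃ b ∈ cantorSet,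
    a < b ∧ Ioo a b ∩ cantorSet = ∅ ∧ (x = a ∨ x = b)}

/-- The Knaster–Kuratowski fan: over endpoints `x ∈ C₁` take the points of the
segment from `(x,0)` to the apex with rational second coordinate, over the other
Cantor points take the points with irrational second coordinate. -/
noncomputable def kkFan : Set (ℝ × ℝ) :=
  ⋃ x ∈ cantorSet, {p ∈ segment ℝ (x, (0:ℝ)) kkApex |
    (x ∈ kkEndpoints ∧ ∃ q : ℚ, p.2 = (q : ℝ)) ∨ (x ∉ kkEndpoints ∧ Irrational p.2)}



lemma one_mem_preCantorSet (n : ℕ) : (1:ℝ) ∈ preCantorSet n := by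
  induction n with
  | zero => simp [preCantorSet]
  | succ n ih => exact Or.inr ⟨1, ih, by norm_num⟩

lemma third_mem_cantorSet : (1/3 : ℝ) ∈ cantorSet := by
  refine Set.mem_iInter.mpr fun n => ?_
  cases n with
  | zero => exact ⟨by norm_num, by norm_num⟩
  | succ n => exact Or.inl ⟨1, one_mem_preCantorSet n, by norm_num⟩

lemma twothirds_mem_cantorSet : (2/3 : ℝ) ∈ cantorSet := by
  refine Set.mem_iInter.mpr fun n => ?_
  cases n with
  | zero => exact ⟨by norm_num, by norm_num⟩
  | succ n => exact Or.inr ⟨0, zero_mem_preCantorSet n, by norm_num⟩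

lemma gap_cantorSet : Ioo (1/3 : ℝ) (2/3) ∩ cantorSet = ∅ := by
  ext y
  simp only [mem_inter_iff, mem_empty_iff_false, iff_false, not_and, mem_Ioo]
  rintro ⟨h1, h2⟩ hy
  have := Set.mem_iInter.mp hy 1
  rcases this with ⟨z, hz, hz'⟩ | ⟨z, hz, hz'⟩
  · have := (preCantorSet_zero ▸ hz).2
    simp only at hz'
    nlinarith
  · have := (preCantorSet_zero ▸ hz).1
    simp only at hz'
    nlinarith


lemma preCantorSet_gap : ∀ n : ℕ, ∀ m : ℤ, ∀ y ∈ preCantorSet (n+1),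
    y ∉ Ioo ((3*m+1)/3^(n+1) : ℝ) ((3*m+2)/3^(n+1)) := by
  intro n
  induction n with
  | zero =>
    rintro m y (⟨z, hz, rfl⟩ | ⟨z, hz, rfl⟩) ⟨h1, h2⟩ <;>
    · simp only [preCantorSet_zero, mem_Icc] at hz
      norm_num at h1 h2
      rw [div_lt_div_iff₀ (by norm_num) (by norm_num)] at h1
      rw [div_lt_div_iff₀ (by norm_num) (by norm_num)] at h2
      have hm : m < 0 ∨ 0 < m := by
        rcases lt_trichotomy m 0 with h | rfl | h
        · exact Or.inl h
        · exfalso; norm_num at h1 h2; linarith [hz.1, hz.2]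
        · exact Or.inr h
      rcases hm with h | h
      · have : (m:ℝ) ≤ -1 := by exact_mod_cast Int.le_sub_one_of_lt h
        nlinarith [hz.1, hz.2]
      · have : (1:ℝ) ≤ (m:ℝ) := by exact_mod_cast h
        nlinarith [hz.1, hz.2]
  | succ n ih =>
    have h3 : (3:ℝ)^(n+1+1) = 3^(n+1) * 3 := by ring
    have h4 : (3:ℝ)^(n+1) = 3*3^n := by ring
    have hp : (0:ℝ) < 3^(n+1) := by positivity
    rintro m y (⟨z, hz, rfl⟩ | ⟨z, hz, rfl⟩) ⟨h1, h2⟩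
    · refine ih m z hz ⟨?_, ?_⟩
      · rw [div_lt_iff₀ (by norm_num)] at h1 ⊢
        rw [h3] at h1; nlinarith
      · rw [lt_div_iff₀ (by norm_num)] at h2 ⊢
        rw [h3] at h2; nlinarith
    · refine ih (m - 2*3^n) z hz ⟨?_, ?_⟩
      · rw [div_lt_iff₀ hp]
        rw [div_lt_iff₀ (by positivity)] at h1
        push_cast
        rw [h3] at h1
        nlinarith
      · rw [lt_div_iff₀ hp]
        rw [lt_div_iff₀ (by positivity)] at h2
        push_cast
        rw [h3] at h2
        nlinarith

lemma cantorSet_gap' (n : ℕ) (m : ℤ) :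
    (3*(m:ℝ)+3/2)/3^(n+1) ∉ cantorSet := by
  intro h
  have hy := Set.mem_iInter.mp h (n+1)
  have hp : (0:ℝ) < 3^(n+1) := by positivity
  refine preCantorSet_gap n m _ hy ⟨?_, ?_⟩ <;>
    rw [div_lt_div_iff₀ hp hp] <;> nlinarith

/-- Between any two reals there is a non-Cantor point. -/
lemma exists_notMem_cantorSet {a b : ℝ} (hab : a < b) :
    ∃ c, a < c ∧ c < b ∧ c ∉ cantorSet := by
  obtain ⟨n, hn⟩ := pow_unbounded_of_one_lt (4/(b-a)) (by norm_num : (1:ℝ) < 3)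
  have h3 : (0:ℝ) < 3^(n+1) := by positivity
  have h4 : (0:ℝ) < b - a := by linarith
  have hlt : 4 < (b-a) * 3^(n+1) := by
    rw [div_lt_iff₀ h4] at hn
    have : (3:ℝ)^(n+1) = 3^n*3 := by ring
    nlinarith [pow_pos (by norm_num : (0:ℝ) < 3) n]
  set m : ℤ := ⌊(a*3^(n+1) - 1)/3⌋ + 1 with hm
  have hml : (a*3^(n+1) - 1)/3 < m := by rw [hm]; push_cast; exact Int.lt_floor_add_one _
  have hmu : (m:ℝ) ≤ (a*3^(n+1) - 1)/3 + 1 := by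
    rw [hm]; push_cast; linarith [Int.floor_le ((a*3^(n+1) - 1)/3)]
  refine ⟨(3*(m:ℝ)+3/2)/3^(n+1), ?_, ?_, cantorSet_gap' n m⟩
  · rw [lt_div_iff₀ h3]; linarith
  · rw [div_lt_iff₀ h3]; linarith

lemma mem_kkFan_intro {x t : ℝ} (hx : x ∈ cantorSet) (h0 : 0 ≤ t) (h1 : t ≤ 1)
    (hcond : (x ∈ kkEndpoints ∧ ∃ q : ℚ, t/2 = (q:ℝ)) ∨ (x ∉ kkEndpoints ∧ Irrational (t/2))) :
    ((1-t)*x + t/2, t/2) ∈ kkFan := by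
  refine mem_iUnion₂.mpr ⟨x, hx, ⟨⟨1-t, t, by linarith, h0, by ring, ?_⟩, hcond⟩⟩
  simp only [kkApex, Prod.smul_mk, smul_eq_mul, Prod.mk_add_mk, Prod.mk.injEq]
  constructor <;> ring

lemma mem_kkFan_elim {u : ℝ × ℝ} (hu : u ∈ kkFan) :
    ∃ x ∈ cantorSet, 0 ≤ u.2 ∧ u.1 = (1-2*u.2)*x + u.2 ∧
      ((x ∈ kkEndpoints ∧ ∃ q : ℚ, u.2 = (q:ℝ)) ∨ (x ∉ kkEndpoints ∧ Irrational u.2)) := by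
  obtain ⟨x, hx, ⟨⟨a, b, ha, hb, hab, heq⟩, hcond⟩⟩ := mem_iUnion₂.mp hu
  simp only [kkApex, Prod.smul_mk, smul_eq_mul, Prod.mk_add_mk, Prod.ext_iff] at heq
  obtain ⟨he1, he2⟩ := heq
  have hb2 : b = 2 * u.2 := by rw [← he2]; ring
  refine ⟨x, hx, ?_, ?_, hcond⟩
  · rw [← he2]; linarith
  · rw [← he1, hb2]
    have : a = 1 - 2*u.2 := by rw [hb2] at hab; linarith
    rw [this]; ring

lemma third_mem_kkEndpoints : (1/3 : ℝ) ∈ kkEndpoints :=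
  ⟨third_mem_cantorSet, 1/3, third_mem_cantorSet, 2/3, twothirds_mem_cantorSet,
    by norm_num, gap_cantorSet, Or.inl rfl⟩

lemma half_notMem_cantorSet : (1/2 : ℝ) ∉ cantorSet := fun h =>
  absurd (gap_cantorSet ▸ (mem_inter (by norm_num) h : (1/2:ℝ) ∈ Ioo (1/3:ℝ) (2/3) ∩ cantorSet))
    (notMem_empty _)

/-- The Knaster–Kuratowski fan (with the subspace topology from `ℝ²`) is not
locally connected. -/
theorem stmt_7 : ¬ LocallyConnectedSpace ↥kkFan := by
  intro h
  have hp : ((1/3 : ℝ), (0:ℝ)) ∈ kkFan := by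
    have := mem_kkFan_intro third_mem_cantorSet (le_refl 0) zero_le_one
      (Or.inl ⟨third_mem_kkEndpoints, 0, by norm_num⟩)
    norm_num at this
    convert this using 2 <;> norm_num
  set P : ↥kkFan := ⟨((1/3 : ℝ), (0:ℝ)), hp⟩ with hPdef
  -- the neighborhood U of points with height < 1/4
  have hUopen : IsOpen {u : ↥kkFan | (u:ℝ×ℝ).2 < 1/4} :=
    isOpen_lt (continuous_snd.comp continuous_subtype_val) continuous_const
  have hU : {u : ↥kkFan | (u:ℝ×ℝ).2 < 1/4} ∈ nhds P :=
    hUopen.mem_nhds (by norm_num [hPdef])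
  obtain ⟨V, hVU, hVopen, hPV, hVconn⟩ :=
    (locallyConnectedSpace_iff_subsets_isOpen_isConnected.mp h) P _ hU
  obtain ⟨ε, hε, hball⟩ := Metric.isOpen_iff.mp hVopen P hPV
  obtain ⟨s2, hs20, hs21⟩ := exists_rat_btwn (lt_min hε (by norm_num : (0:ℝ) < 1/4))
  have hs2ε : (s2:ℝ) < ε := hs21.trans_le (min_le_left _ _)
  have hs2q : (s2:ℝ) < 1/4 := hs21.trans_le (min_le_right _ _)
  -- the point Q on the leg over 1/3 at rational height s2
  have hQmem : ((1 - 2*(s2:ℝ))*(1/3) + (2*(s2:ℝ))/2, (2*(s2:ℝ))/2) ∈ kkFan := by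
    have := mem_kkFan_intro third_mem_cantorSet (t := 2*(s2:ℝ)) (by linarith) (by linarith)
      (Or.inl ⟨third_mem_kkEndpoints, s2, by ring⟩)
    convert this using 3 <;> ring
  set Q : ↥kkFan := ⟨_, hQmem⟩ with hQdef
  have hQV : Q ∈ V := by
    apply hball
    rw [Metric.mem_ball, Subtype.dist_eq, Prod.dist_eq]
    simp only [hQdef, hPdef]
    rw [Real.dist_eq, Real.dist_eq]
    have e1 : |(1 - 2*(s2:ℝ))*(1/3) + (2*(s2:ℝ))/2 - 1/3| = (s2:ℝ)/3 := by
      rw [abs_of_nonneg (by linarith)]; ring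
    have e2 : |(2*(s2:ℝ))/2 - 0| = (s2:ℝ) := by
      rw [abs_of_nonneg (by linarith)]; ring
    rw [e1, e2]
    exact max_lt (by linarith) (by linarith)
  -- the irrational height r between 0 and s2
  set r : ℝ := (s2:ℝ) / Real.sqrt 2 with hrdef
  have hsqrt1 : (1:ℝ) < Real.sqrt 2 := by
    rw [show (1:ℝ) = Real.sqrt 1 from (Real.sqrt_one).symm]
    exact Real.sqrt_lt_sqrt (by norm_num) (by norm_num)
  have hr0 : 0 < r := div_pos hs20 (by linarith)
  have hrs2 : r < (s2:ℝ) := by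
    rw [hrdef, div_lt_iff₀ (by linarith)]; nlinarith
  have hrirr : Irrational r := by
    refine irrational_sqrt_two.ratCast_div (q := s2) ?_
    have : (0:ℝ) < (s2:ℝ) := hs20
    exact_mod_cast this.ne'
  -- IVT: find a point w of V at height r
  have hcont2 : Continuous (fun u : ↥kkFan => (u:ℝ×ℝ).2) :=
    continuous_snd.comp continuous_subtype_val
  have hIVT1 := hVconn.isPreconnected.intermediate_value hPV hQV hcont2.continuousOn
  have hr_mem : r ∈ Icc ((fun u : ↥kkFan => (u:ℝ×ℝ).2) P) ((fun u : ↥kkFan => (u:ℝ×ℝ).2) Q) := by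
    simp only [hPdef, hQdef]
    constructor
    · exact hr0.le
    · show r ≤ (2*(s2:ℝ))/2
      linarith
  obtain ⟨w, hwV, hw2⟩ := hIVT1 hr_mem
  have hw2' : ((w : ℝ×ℝ)).2 = r := hw2
  -- analyze w
  obtain ⟨x', hx'C, hw0, hw1, hwcond⟩ := mem_kkFan_elim w.2
  rw [hw2'] at hw1
  have hx'not : x' ∉ kkEndpoints := by
    rcases hwcond with ⟨_, q, hq⟩ | ⟨hn, _⟩
    · exact absurd ⟨q, (hw2' ▸ hq).symm⟩ hrirr
    · exact hn
  have hx'ne : x' ≠ 1/3 := fun he => hx'not (he ▸ third_mem_kkEndpoints)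
  have hx'gap : x' ∉ Ioo (1/3:ℝ) (2/3) := fun hmem =>
    absurd (gap_cantorSet ▸ mem_inter hmem hx'C) (notMem_empty _)
  have hr14 : r < 1/4 := hrs2.trans hs2q
  have h12r : 0 < 1 - 2*r := by linarith
  -- choose a non-Cantor point c separating x' from 1/3, with sign data
  obtain ⟨c, hcC, hsgn⟩ :
      ∃ c, c ∉ cantorSet ∧ ((1-2*r)*(x'-c) < 0 ∧ 0 < 1/3 - c ∨ 1/3 - c < 0 ∧ 0 < (1-2*r)*(x'-c)) := by
    rcases lt_trichotomy x' (1/3) with hlt | heq | hgt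
    · obtain ⟨c, hc1, hc2, hcC⟩ := exists_notMem_cantorSet hlt
      exact ⟨c, hcC, Or.inl ⟨by nlinarith, by linarith⟩⟩
    · exact absurd heq hx'ne
    · have hge : (2/3:ℝ) ≤ x' := by
        by_contra hcon
        exact hx'gap ⟨hgt, lt_of_not_ge hcon⟩
      exact ⟨1/2, half_notMem_cantorSet, Or.inr ⟨by norm_num, by nlinarith⟩⟩
  -- IVT with the separating line through the apex and (c, 0)
  set g : ↥kkFan → ℝ := fun u => (u:ℝ×ℝ).1 - c - (u:ℝ×ℝ).2 * (1 - 2*c) with hgdef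
  have hgcont : Continuous g := by
    apply Continuous.sub
    · exact (continuous_fst.comp continuous_subtype_val).sub continuous_const
    · exact (continuous_snd.comp continuous_subtype_val).mul continuous_const
  have hgP : g P = 1/3 - c := by
    show (1/3:ℝ) - c - 0 * (1 - 2*c) = 1/3 - c
    ring
  have hgw : g w = (1-2*r)*(x'-c) := by
    simp only [hgdef]
    rw [hw2', hw1]; ring
  have hzero : ∃ u ∈ V, g u = 0 := by
    rcases hsgn with ⟨hneg, hpos⟩ | ⟨hneg, hpos⟩
    · have h0mem : (0:ℝ) ∈ Icc (g w) (g P) := ⟨by rw [hgw]; linarith, by rw [hgP]; linarith⟩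
      obtain ⟨u, huV, hgu⟩ := hVconn.isPreconnected.intermediate_value hwV hPV
        hgcont.continuousOn h0mem
      exact ⟨u, huV, hgu⟩
    · have h0mem : (0:ℝ) ∈ Icc (g P) (g w) := ⟨by rw [hgP]; linarith, by rw [hgw]; linarith⟩
      obtain ⟨u, huV, hgu⟩ := hVconn.isPreconnected.intermediate_value hPV hwV
        hgcont.continuousOn h0mem
      exact ⟨u, huV, hgu⟩
  obtain ⟨u, huV, hgu⟩ := hzero
  obtain ⟨xu, hxuC, hu0, hu1, _⟩ := mem_kkFan_elim u.2
  have hu4 : (u:ℝ×ℝ).2 < 1/4 := hVU huV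
  have hfactor : (1 - 2*(u:ℝ×ℝ).2) * (xu - c) = 0 := by
    simp only [hgdef] at hgu
    rw [hu1] at hgu
    nlinarith [hgu]
  rcases mul_eq_zero.mp hfactor with h1 | h2
  · linarith
  · exact hcC (by rw [show c = xu by linarith] ; exact hxuC)
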